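/- Let A, B, C, A', B', C' be compact convex sets in ℝ² with A ∩ B ∩ C = ∅ and A' ∩ B' ∩ C' = ∅. Then there exist two distinct sets X, Y from {A,B,C} and one set Z from {A',B',C'} with X ∩ Y ∩ Z = ∅. -/

import Mathlib

open Set

/-- existence of lexicographic minimum on a nonempty compact set in ℝ². -/
lemma exists_lexmin {S : Set (ℝ × ℝ)} (hS : IsCompact S) (hne : S.Nonempty) :
    ∃ p ∈ S, ∀ q ∈ S, toLex p ≤ toLex q := by
  obtain ⟨p, hpS, hp⟩ := hS.exists_isMinOn hne continuous_fst.continuousOn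
  have hS1 : IsCompact (S ∩ Prod.fst ⁻¹' {p.1}) :=
    hS.inter_right (isClosed_singleton.preimage continuous_fst)
  obtain ⟨q, hqS1, hq⟩ := hS1.exists_isMinOn ⟨p, hpS, rfl⟩ continuous_snd.continuousOn
  refine ⟨q, hqS1.1, fun r hr => ?_⟩
  have hq1 : q.1 = p.1 := hqS1.2
  have h1 : p.1 ≤ r.1 := hp hr
  rw [Prod.Lex.le_iff]
  rcases lt_or_eq_of_le (hq1 ▸ h1 : q.1 ≤ r.1) with h | h
  · exact Or.inl h
  · exact Or.inr ⟨h, hq ⟨hr, by simp [← h, hq1]⟩⟩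

lemma lex_lt_convex (c : ℝ × ℝ) : Convex ℝ {x : ℝ × ℝ | toLex x < toLex c} := by
  rintro x hx y hy a b ha hb hab
  simp only [mem_setOf_eq, Prod.Lex.lt_iff, ofLex_toLex] at hx hy ⊢
  have hz1 : (a • x + b • y).1 = a * x.1 + b * y.1 := rfl
  have hz2 : (a • x + b • y).2 = a * x.2 + b * y.2 := rfl
  rcases hx with hx1 | ⟨hx1, hx2⟩ <;> rcases hy with hy1 | ⟨hy1, hy2⟩
  · left; rw [hz1]
    simpa using (convex_Iio (c.1)) (mem_Iio.2 hx1) (mem_Iio.2 hy1) ha hb hab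
  · rcases eq_or_lt_of_le ha with ha0 | ha0
    · right
      have hb1 : b = 1 := by linarith
      constructor
      · rw [hz1, ← ha0, hb1]; simpa using hy1
      · rw [hz2, ← ha0, hb1]; simpa using hy2
    · left; rw [hz1]
      have hc : a * c.1 + b * c.1 = c.1 := by rw [← add_mul, hab, one_mul]
      linarith [mul_lt_mul_of_pos_left hx1 ha0, mul_le_mul_of_nonneg_left hy1.le hb]
  · rcases eq_or_lt_of_le hb with hb0 | hb0
    · right
      have ha1 : a = 1 := by linarith
      constructor
      · rw [hz1, ← hb0, ha1]; simpa using hx1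
      · rw [hz2, ← hb0, ha1]; simpa using hx2
    · left; rw [hz1]
      have hc : a * c.1 + b * c.1 = c.1 := by rw [← add_mul, hab, one_mul]
      linarith [mul_lt_mul_of_pos_left hy1 hb0, mul_le_mul_of_nonneg_left hx1.le ha]
  · right
    constructor
    · rw [hz1, hx1, hy1, ← add_mul, hab, one_mul]
    · rw [hz2]
      simpa using (convex_Iio (c.2)) (mem_Iio.2 hx2) (mem_Iio.2 hy2) ha hb hab

lemma not_affineIndependent_four (f : Fin 4 → ℝ × ℝ) : ¬ AffineIndependent ℝ f := by
  intro h
  have hcard := h.card_le_finrank_succ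
  have hle : Module.finrank ℝ (vectorSpan ℝ (Set.range f)) ≤ Module.finrank ℝ (ℝ × ℝ) :=
    Submodule.finrank_le _
  have h2 : Module.finrank ℝ (ℝ × ℝ) = 2 := by
    simp [Module.finrank_prod]
  rw [Fintype.card_fin] at hcard
  have := hcard.trans (Nat.add_le_add_right (hle.trans_eq h2) 1)
  norm_num at this

/-- Key step: the lex-minimum of a triple intersection of convex sets is already
the lex-minimum of one of the pairwise intersections. -/
lemma key {K1 K2 K3 : Set (ℝ × ℝ)} (hc1 : Convex ℝ K1) (hc2 : Convex ℝ K2)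
    (hc3 : Convex ℝ K3) {y : ℝ × ℝ} (hy : y ∈ K1 ∩ K2 ∩ K3)
    (hmin : ∀ x ∈ K1 ∩ K2 ∩ K3, toLex y ≤ toLex x) :
    (∀ x ∈ K1 ∩ K2, toLex y ≤ toLex x) ∨ (∀ x ∈ K2 ∩ K3, toLex y ≤ toLex x) ∨
      (∀ x ∈ K1 ∩ K3, toLex y ≤ toLex x) := by
  by_contra hcon
  push_neg at hcon
  obtain ⟨⟨p3, hp3, hp3lt⟩, ⟨p1, hp1, hp1lt⟩, ⟨p2, hp2, hp2lt⟩⟩ := hcon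
  set f : Fin 4 → ℝ × ℝ := ![y, p1, p2, p3] with hf
  obtain ⟨I, q, hqI, hqIc⟩ := Convex.radon_partition (not_affineIndependent_four f)
  have helper : ∀ (i0 : Fin 4) (K : Set (ℝ × ℝ)), Convex ℝ K →
      (∀ j : Fin 4, j ≠ i0 → f j ∈ K) → q ∈ K := by
    intro i0 K hK hall
    by_cases h0 : i0 ∈ I
    · refine convexHull_min ?_ hK hqIc
      rintro _ ⟨j, hj, rfl⟩
      exact hall j (fun e => hj (e ▸ h0))
    · refine convexHull_min ?_ hK hqI
      rintro _ ⟨j, hj, rfl⟩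
      exact hall j (fun e => h0 (e ▸ hj))
  have hqK1 : q ∈ K1 := by
    refine helper 1 K1 hc1 ?_
    intro j hj; fin_cases j
    · exact hy.1.1
    · exact absurd rfl hj
    · exact hp2.1
    · exact hp3.1
  have hqK2 : q ∈ K2 := by
    refine helper 2 K2 hc2 ?_
    intro j hj; fin_cases j
    · exact hy.1.2
    · exact hp1.1
    · exact absurd rfl hj
    · exact hp3.2
  have hqK3 : q ∈ K3 := by
    refine helper 3 K3 hc3 ?_
    intro j hj; fin_cases j
    · exact hy.2
    · exact hp1.2
    · exact hp2.2
    · exact absurd rfl hj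
  have hqH : q ∈ {x : ℝ × ℝ | toLex x < toLex y} := by
    refine helper 0 _ (lex_lt_convex y) ?_
    intro j hj; fin_cases j
    · exact absurd rfl hj
    · exact hp1lt
    · exact hp2lt
    · exact hp3lt
  exact absurd (hmin q ⟨⟨hqK1, hqK2⟩, hqK3⟩) (not_le.2 hqH)

/-- Proposition (H1): if `A ∩ B ∩ C = ∅` and `A' ∩ B' ∩ C' = ∅` for compact
convex planar sets, then some mixed triple (two distinct sets among `{A,B,C}`
and one among `{A',B',C'}`) has empty intersection. -/
theorem blue_disjoint_edges (A B C A' B' C' : Set (ℝ × ℝ))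
    (hAcp : IsCompact A) (hBcp : IsCompact B) (hCcp : IsCompact C)
    (hA'cp : IsCompact A') (hB'cp : IsCompact B') (hC'cp : IsCompact C')
    (hAcv : Convex ℝ A) (hBcv : Convex ℝ B) (hCcv : Convex ℝ C)
    (hA'cv : Convex ℝ A') (hB'cv : Convex ℝ B') (hC'cv : Convex ℝ C')
    (h1 : A ∩ B ∩ C = ∅) (h2 : A' ∩ B' ∩ C' = ∅) :
    ∃ Z ∈ ({A', B', C'} : Set (Set (ℝ × ℝ))),
      A ∩ B ∩ Z = ∅ ∨ B ∩ C ∩ Z = ∅ ∨ C ∩ A ∩ Z = ∅ := by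
  by_contra hcon
  push_neg at hcon
  have hA'' := hcon A' (by simp)
  have hB'' := hcon B' (by simp)
  have hC'' := hcon C' (by simp)
  set G : Fin 3 → Set (ℝ × ℝ) := ![A, B, C] with hG
  set F : Fin 3 → Set (ℝ × ℝ) := ![A', B', C'] with hF
  have hGcp : ∀ j, IsCompact (G j) := by
    intro j; fin_cases j <;> simpa [hG]
  have hGcv : ∀ j, Convex ℝ (G j) := by
    intro j; fin_cases j <;> simpa [hG]
  have hFcp : ∀ i, IsCompact (F i) := by
    intro i; fin_cases i <;> simpa [hF]
  have hFcv : ∀ i, Convex ℝ (F i) := by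
    intro i; fin_cases i <;> simpa [hF]
  have hAB : ∀ i, (A ∩ B ∩ F i).Nonempty := by
    intro i; fin_cases i <;>
      simp only [hF, Matrix.cons_val_zero, Matrix.cons_val_one, Matrix.head_cons,
        Matrix.cons_val_two, Matrix.tail_cons]
    exacts [hA''.1, hB''.1, hC''.1]
  have hBC : ∀ i, (B ∩ C ∩ F i).Nonempty := by
    intro i; fin_cases i <;>
      simp only [hF, Matrix.cons_val_zero, Matrix.cons_val_one, Matrix.head_cons,
        Matrix.cons_val_two, Matrix.tail_cons]
    exacts [hA''.2.1, hB''.2.1, hC''.2.1]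
  have hCA : ∀ i, (C ∩ A ∩ F i).Nonempty := by
    intro i; fin_cases i <;>
      simp only [hF, Matrix.cons_val_zero, Matrix.cons_val_one, Matrix.head_cons,
        Matrix.cons_val_two, Matrix.tail_cons]
    exacts [hA''.2.2, hB''.2.2, hC''.2.2]
  have hTne : ∀ (i j k : Fin 3), (G j ∩ G k ∩ F i).Nonempty := by
    intro i j k
    fin_cases j <;> fin_cases k <;>
      simp only [hG, Matrix.cons_val_zero, Matrix.cons_val_one, Matrix.head_cons,
        Matrix.cons_val_two, Matrix.tail_cons]
    · obtain ⟨x, ⟨hx1, hx2⟩, hx3⟩ := hAB i; exact ⟨x, ⟨hx1, hx1⟩, hx3⟩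
    · exact hAB i
    · obtain ⟨x, ⟨hx1, hx2⟩, hx3⟩ := hCA i; exact ⟨x, ⟨hx2, hx1⟩, hx3⟩
    · obtain ⟨x, ⟨hx1, hx2⟩, hx3⟩ := hAB i; exact ⟨x, ⟨hx2, hx1⟩, hx3⟩
    · obtain ⟨x, ⟨hx1, hx2⟩, hx3⟩ := hAB i; exact ⟨x, ⟨hx2, hx2⟩, hx3⟩
    · exact hBC i
    · exact hCA i
    · obtain ⟨x, ⟨hx1, hx2⟩, hx3⟩ := hBC i; exact ⟨x, ⟨hx2, hx1⟩, hx3⟩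
    · obtain ⟨x, ⟨hx1, hx2⟩, hx3⟩ := hBC i; exact ⟨x, ⟨hx2, hx2⟩, hx3⟩
  have hTcp : ∀ (i j k : Fin 3), IsCompact (G j ∩ G k ∩ F i) :=
    fun i j k => ((hGcp j).inter_right (hGcp k).isClosed).inter_right (hFcp i).isClosed
  have hex : ∀ t : Fin 3 × Fin 3 × Fin 3,
      ∃ p ∈ G t.2.1 ∩ G t.2.2 ∩ F t.1, ∀ q ∈ G t.2.1 ∩ G t.2.2 ∩ F t.1,
        toLex p ≤ toLex q :=
    fun t => exists_lexmin (hTcp t.1 t.2.1 t.2.2) (hTne t.1 t.2.1 t.2.2)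
  choose y hyT hymin using hex
  obtain ⟨m, -, hm⟩ := Finset.exists_max_image (Finset.univ : Finset (Fin 3 × Fin 3 × Fin 3))
    (fun t => toLex (y t)) ⟨⟨0, 0, 0⟩, Finset.mem_univ _⟩
  obtain ⟨i0, j0, k0⟩ := m
  have hkey := key (hGcv j0) (hGcv k0) (hFcv i0) (hyT ⟨i0, j0, k0⟩) (hymin ⟨i0, j0, k0⟩)
  have hGABC : G 0 ∩ G 1 ∩ G 2 = A ∩ B ∩ C := by simp [hG]
  have hFABC : F 0 ∩ F 1 ∩ F 2 = A' ∩ B' ∩ C' := by simp [hF]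
  rcases hkey with hp | hp | hp
  · -- pair G j0 ∩ G k0 : vary i, get point in A' ∩ B' ∩ C'
    have hall : ∀ i, y ⟨i0, j0, k0⟩ ∈ F i := by
      intro i
      have h1' : toLex (y ⟨i0, j0, k0⟩) ≤ toLex (y ⟨i, j0, k0⟩) :=
        hp _ (hyT ⟨i, j0, k0⟩).1
      have h2' : toLex (y ⟨i, j0, k0⟩) ≤ toLex (y ⟨i0, j0, k0⟩) := hm _ (Finset.mem_univ _)
      have heq : y ⟨i, j0, k0⟩ = y ⟨i0, j0, k0⟩ := toLex.injective (le_antisymm h2' h1')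
      exact heq ▸ (hyT ⟨i, j0, k0⟩).2
    have : y ⟨i0, j0, k0⟩ ∈ A' ∩ B' ∩ C' := hFABC ▸ ⟨⟨hall 0, hall 1⟩, hall 2⟩
    rw [h2] at this; exact this
  · -- pair G k0 ∩ F i0 : vary j, get point in A ∩ B ∩ C
    have hall : ∀ j, y ⟨i0, j0, k0⟩ ∈ G j := by
      intro j
      have h1' : toLex (y ⟨i0, j0, k0⟩) ≤ toLex (y ⟨i0, j, k0⟩) :=
        hp _ ⟨(hyT ⟨i0, j, k0⟩).1.2, (hyT ⟨i0, j, k0⟩).2⟩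
      have h2' : toLex (y ⟨i0, j, k0⟩) ≤ toLex (y ⟨i0, j0, k0⟩) := hm _ (Finset.mem_univ _)
      have heq : y ⟨i0, j, k0⟩ = y ⟨i0, j0, k0⟩ := toLex.injective (le_antisymm h2' h1')
      exact heq ▸ (hyT ⟨i0, j, k0⟩).1.1
    have : y ⟨i0, j0, k0⟩ ∈ A ∩ B ∩ C := hGABC ▸ ⟨⟨hall 0, hall 1⟩, hall 2⟩
    rw [h1] at this; exact this
  · -- pair G j0 ∩ F i0 : vary k, get point in A ∩ B ∩ C
    have hall : ∀ k, y ⟨i0, j0, k0⟩ ∈ G k := by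
      intro k
      have h1' : toLex (y ⟨i0, j0, k0⟩) ≤ toLex (y ⟨i0, j0, k⟩) :=
        hp _ ⟨(hyT ⟨i0, j0, k⟩).1.1, (hyT ⟨i0, j0, k⟩).2⟩
      have h2' : toLex (y ⟨i0, j0, k⟩) ≤ toLex (y ⟨i0, j0, k0⟩) := hm _ (Finset.mem_univ _)
      have heq : y ⟨i0, j0, k⟩ = y ⟨i0, j0, k0⟩ := toLex.injective (le_antisymm h2' h1')
      exact heq ▸ (hyT ⟨i0, j0, k⟩).1.2
    have : y ⟨i0, j0, k0⟩ ∈ A ∩ B ∩ C := hGABC ▸ ⟨⟨hall 0, hall 1⟩, hall 2⟩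
    rw [h1] at this; exact this
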